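/- Let k ≥ 1, let α ∈ (−(k+1)/2, −k/2), and let g : (0,∞)^k → ℝ be measurable with g(c x) = c^α g(x) for all c > 0 and x ∈ (0,∞)^k, and ∫_{(0,∞)^k} |g(y) g(1+y)| dy < ∞. Then for every λ > 0 and t ≥ 0 the function h_t^λ(x) = ∫_0^t g(s·1 − x) · exp(−λ Σ_{i=1}^k (s − x_i)) · 1_{{x_i < s for all i}} ds belongs to L²(ℝ^k). -/

import Mathlib

open MeasureTheory Real Set
open scoped ENNReal NNReal

/-- The kernel `h_t^λ` of the tempered generalized Hermite process:
`h_t^λ(x) = ∫_0^t g(s·1 − x) · exp(−λ ∑ᵢ (s − xᵢ)) · 1_{xᵢ < s ∀ i} ds`. -/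
noncomputable def tghKernel {k : ℕ} (g : (Fin k → ℝ) → ℝ) (lam t : ℝ)
    (x : Fin k → ℝ) : ℝ :=
  ∫ s in Set.Ioc (0 : ℝ) t,
    Set.indicator {s' : ℝ | ∀ i, x i < s'}
      (fun s' => g (fun i => s' - x i) * Real.exp (-lam * ∑ i, (s' - x i))) s

namespace TGHAux

variable {k : ℕ}

/-- Product-space version of the integrand of `tghKernel`. -/
noncomputable def F (g : (Fin k → ℝ) → ℝ) (lam : ℝ) (p : (Fin k → ℝ) × ℝ) : ℝ :=
  Set.indicator {q : (Fin k → ℝ) × ℝ | ∀ i, q.1 i < q.2}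
    (fun q => g (fun i => q.2 - q.1 i) * Real.exp (-lam * ∑ i, (q.2 - q.1 i))) p

lemma F_eq (g : (Fin k → ℝ) → ℝ) (lam : ℝ) (x : Fin k → ℝ) (s : ℝ) :
    Set.indicator {s' : ℝ | ∀ i, x i < s'}
      (fun s' => g (fun i => s' - x i) * Real.exp (-lam * ∑ i, (s' - x i))) s
      = F g lam (x, s) := by
  by_cases h : ∀ i, x i < s
  · rw [Set.indicator_of_mem (by exact h), F,
      Set.indicator_of_mem (by exact h : (x, s) ∈ {q : (Fin k → ℝ) × ℝ | ∀ i, q.1 i < q.2})]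
  · rw [Set.indicator_of_notMem (by exact h), F,
      Set.indicator_of_notMem
        (by exact h : (x, s) ∉ {q : (Fin k → ℝ) × ℝ | ∀ i, q.1 i < q.2})]

lemma measurable_F {g : (Fin k → ℝ) → ℝ} (hg : Measurable g) (lam : ℝ) :
    Measurable (F g lam) := by
  have hset : MeasurableSet {q : (Fin k → ℝ) × ℝ | ∀ i, q.1 i < q.2} := by
    rw [Set.setOf_forall]
    exact MeasurableSet.iInter fun i =>
      measurableSet_lt (measurable_fst.eval) measurable_snd
  have hsub : ∀ i : Fin k, Measurable fun q : (Fin k → ℝ) × ℝ => q.2 - q.1 i := fun i =>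
    measurable_snd.sub measurable_fst.eval
  refine Measurable.indicator (Measurable.mul ?_ ?_) hset
  · exact hg.comp (measurable_pi_lambda _ fun i => hsub i)
  · exact Real.measurable_exp.comp
      (measurable_const.mul (Finset.measurable_sum _ fun i _ => hsub i))

/-- ENNReal version of the absolute value of the integrand. -/
noncomputable def Phi (g : (Fin k → ℝ) → ℝ) (lam : ℝ) (p : (Fin k → ℝ) × ℝ) : ℝ≥0∞ :=
  ENNReal.ofReal |F g lam p|

lemma measurable_Phi {g : (Fin k → ℝ) → ℝ} (hg : Measurable g) (lam : ℝ) :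
    Measurable (Phi g lam) :=
  ((measurable_F hg lam).abs).ennreal_ofReal

lemma Phi_of_not_mem {g : (Fin k → ℝ) → ℝ} {lam : ℝ} {x : Fin k → ℝ} {s : ℝ}
    (h : ¬ ∀ i, x i < s) : Phi g lam (x, s) = 0 := by
  unfold Phi F
  rw [Set.indicator_of_notMem
    (by exact h : (x, s) ∉ {q : (Fin k → ℝ) × ℝ | ∀ i, q.1 i < q.2})]
  simp

lemma Phi_le {g : (Fin k → ℝ) → ℝ} {lam : ℝ} (hlam : 0 < lam) {x : Fin k → ℝ} {s : ℝ}
    (h : ∀ i, x i < s) :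
    Phi g lam (x, s) ≤ ENNReal.ofReal |g (fun i => s - x i)| := by
  unfold Phi F
  rw [Set.indicator_of_mem
    (by exact h : (x, s) ∈ {q : (Fin k → ℝ) × ℝ | ∀ i, q.1 i < q.2})]
  apply ENNReal.ofReal_le_ofReal
  rw [abs_mul, Real.abs_exp]
  have hexp : Real.exp (-lam * ∑ i, (s - x i)) ≤ 1 := by
    rw [Real.exp_le_one_iff]
    have hsum : (0 : ℝ) ≤ ∑ i, (s - x i) :=
      Finset.sum_nonneg fun i _ => by linarith [h i]
    nlinarith
  exact mul_le_of_le_one_right (abs_nonneg _) hexp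

/-- Pointwise bound for the product kernel. -/
lemma Phi_mul_le {g : (Fin k → ℝ) → ℝ} {lam : ℝ} (hlam : 0 < lam)
    (x : Fin k → ℝ) {s u : ℝ} (hsu : s ≤ u) :
    Phi g lam (x, s) * Phi g lam (x, u) ≤
      Set.indicator {x : Fin k → ℝ | ∀ i, x i < s}
        (fun x => ENNReal.ofReal |g (fun i => s - x i)| *
          ENNReal.ofReal |g (fun i => u - x i)|) x := by
  by_cases h : ∀ i, x i < s
  · rw [Set.indicator_of_mem (by exact h)]
    exact mul_le_mul' (Phi_le hlam h) (Phi_le hlam fun i => lt_of_lt_of_le (h i) hsu)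
  · rw [Set.indicator_of_notMem (by exact h), Phi_of_not_mem h, zero_mul]

/-- The key change-of-variables computation. -/
lemma lintegral_indicator_prod_eq {g : (Fin k → ℝ) → ℝ} (hg : Measurable g) (α : ℝ)
    (hhom : ∀ c : ℝ, 0 < c → ∀ x : Fin k → ℝ, (∀ i, 0 < x i) → g (c • x) = c ^ α * g x)
    {s u : ℝ} (hsu : s < u) :
    ∫⁻ x : Fin k → ℝ, Set.indicator {x : Fin k → ℝ | ∀ i, x i < s}
        (fun x => ENNReal.ofReal |g (fun i => s - x i)| *
          ENNReal.ofReal |g (fun i => u - x i)|) x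
      = ENNReal.ofReal ((u - s) ^ (2 * α + (k : ℝ))) *
        ∫⁻ y in {y : Fin k → ℝ | ∀ i, 0 < y i},
          ENNReal.ofReal |g y * g (fun i => 1 + y i)| := by
  set r : ℝ := u - s with hr_def
  have hr : 0 < r := by simp [hr_def]; linarith
  -- the function after translating/reflecting
  set f : (Fin k → ℝ) → ℝ≥0∞ := Set.indicator {w : Fin k → ℝ | ∀ i, 0 < w i}
    (fun w => ENNReal.ofReal |g w| * ENNReal.ofReal |g (fun i => r + w i)|) with hf_def
  have hposset : MeasurableSet {w : Fin k → ℝ | ∀ i, 0 < w i} := by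
    rw [Set.setOf_forall]
    exact MeasurableSet.iInter fun i =>
      measurableSet_lt measurable_const (measurable_pi_apply i)
  have hfmeas : Measurable f := by
    refine Measurable.indicator (Measurable.fun_mul ?_ ?_) hposset
    · exact hg.abs.ennreal_ofReal
    · exact ((hg.comp (measurable_pi_lambda _ fun i =>
        measurable_const.add (measurable_pi_apply i))).abs).ennreal_ofReal
  -- step 1 : translation + reflection
  set c : Fin k → ℝ := fun _ => s with hc
  have step1 : ∫⁻ x : Fin k → ℝ, Set.indicator {x : Fin k → ℝ | ∀ i, x i < s}
        (fun x => ENNReal.ofReal |g (fun i => s - x i)| *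
          ENNReal.ofReal |g (fun i => u - x i)|) x = ∫⁻ w, f w := by
    have heq : ∀ x : Fin k → ℝ, Set.indicator {x : Fin k → ℝ | ∀ i, x i < s}
        (fun x => ENNReal.ofReal |g (fun i => s - x i)| *
          ENNReal.ofReal |g (fun i => u - x i)|) x = f (c - x) := by
      intro x
      by_cases h : ∀ i, x i < s
      · have hmem : (c - x) ∈ {w : Fin k → ℝ | ∀ i, 0 < w i} := by
          intro i; simp only [hc, Pi.sub_apply, sub_pos]; exact h i
        rw [Set.indicator_of_mem (by exact h), hf_def, Set.indicator_of_mem hmem]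
        have h1 : g (c - x) = g fun i => s - x i := by
          have hcx : c - x = fun i => s - x i := by funext i; simp [hc]
          rw [hcx]
        have h2 : (g fun i => r + (c - x) i) = g fun i => u - x i := by
          have hcx : (fun i => r + (c - x) i) = fun i => u - x i := by
            funext i; simp only [hc, Pi.sub_apply, hr_def]; ring
          rw [hcx]
        rw [h1, h2]
      · rw [Set.indicator_of_notMem (by exact h), hf_def,
          Set.indicator_of_notMem (by
            intro hcc
            exact h fun i => by
              have h3 := hcc i
              simp only [hc, Pi.sub_apply, sub_pos] at h3
              exact h3)]
    rw [funext heq]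
    exact (Measure.measurePreserving_sub_left volume c).lintegral_comp hfmeas
  -- step 2 : scaling
  have hfin : Module.finrank ℝ (Fin k → ℝ) = k := by
    rw [Module.finrank_pi]; exact Fintype.card_fin k
  have hmap : Measure.map (r • ·) (volume : Measure (Fin k → ℝ))
      = ENNReal.ofReal |(r ^ k)⁻¹| • volume := by
    have := Measure.map_addHaar_smul (volume : Measure (Fin k → ℝ)) (ne_of_gt hr)
    rwa [hfin] at this
  have step2 : ∫⁻ y : Fin k → ℝ, f (r • y)
      = ENNReal.ofReal |(r ^ k)⁻¹| * ∫⁻ w, f w := by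
    rw [← lintegral_map hfmeas (measurable_const_smul r), hmap, lintegral_smul_measure, smul_eq_mul]
  -- step 3 : homogeneity
  have step3 : ∀ y : Fin k → ℝ, f (r • y)
      = ENNReal.ofReal (r ^ (2 * α)) * Set.indicator {y : Fin k → ℝ | ∀ i, 0 < y i}
          (fun y => ENNReal.ofReal |g y * g (fun i => 1 + y i)|) y := by
    intro y
    by_cases h : ∀ i, 0 < y i
    · have hmem : ∀ i, 0 < (r • y) i := fun i => by
        simp only [Pi.smul_apply, smul_eq_mul]; exact mul_pos hr (h i)
      rw [hf_def, Set.indicator_of_mem (by exact hmem), Set.indicator_of_mem (by exact h)]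
      have e1 : g (r • y) = r ^ α * g y := hhom r hr y h
      have e2 : (fun i => r + (r • y) i) = r • (fun i => 1 + y i) := by
        funext i; simp only [Pi.smul_apply, smul_eq_mul]; ring
      have e3 : g (fun i => r + (r • y) i) = r ^ α * g (fun i => 1 + y i) := by
        rw [e2]; exact hhom r hr _ fun i => by have := h i; linarith
      rw [e1, e3]
      simp only [abs_mul, abs_of_pos (Real.rpow_pos_of_pos hr α)]
      rw [← ENNReal.ofReal_mul (mul_nonneg (Real.rpow_pos_of_pos hr α).le (abs_nonneg _)),
        show r ^ α * |g y| * (r ^ α * |g (fun i => 1 + y i)|)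
          = (r ^ α * r ^ α) * (|g y| * |g (fun i => 1 + y i)|) by ring,
        ← Real.rpow_add hr, ← two_mul, ← abs_mul,
        ENNReal.ofReal_mul (Real.rpow_nonneg hr.le _)]
    · have hmem : ¬ ∀ i, 0 < (r • y) i := by
        intro hc
        refine h fun i => ?_
        have h2 := hc i
        simp only [Pi.smul_apply, smul_eq_mul] at h2
        nlinarith
      rw [hf_def, Set.indicator_of_notMem (by exact hmem),
        Set.indicator_of_notMem (by exact h), mul_zero]
  -- combine
  rw [step1]
  have c1pos : (0 : ℝ) < r ^ k := pow_pos hr k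
  have hinv : ENNReal.ofReal |(r ^ k)⁻¹| = (ENNReal.ofReal (r ^ k))⁻¹ := by
    rw [abs_of_pos (by positivity), ENNReal.ofReal_inv_of_pos c1pos]
  have hne0 : ENNReal.ofReal (r ^ k) ≠ 0 := by
    simp [ENNReal.ofReal_eq_zero, not_le, c1pos]
  have hnetop : ENNReal.ofReal (r ^ k) ≠ ⊤ := ENNReal.ofReal_ne_top
  have : ∫⁻ w, f w = ENNReal.ofReal (r ^ k) * ∫⁻ y : Fin k → ℝ, f (r • y) := by
    rw [step2, hinv, ← mul_assoc, ENNReal.mul_inv_cancel hne0 hnetop, one_mul]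
  have hindmeas : Measurable (fun y : Fin k → ℝ => Set.indicator {y : Fin k → ℝ | ∀ i, 0 < y i}
      (fun y => ENNReal.ofReal |g y * g (fun i => 1 + y i)|) y) :=
    Measurable.indicator ((hg.mul (hg.comp (measurable_pi_lambda _ fun i =>
      measurable_const.add (measurable_pi_apply i)))).abs.ennreal_ofReal) hposset
  rw [this, funext step3, lintegral_const_mul _ hindmeas,
    lintegral_indicator hposset, ← mul_assoc]
  congr 1
  rw [← ENNReal.ofReal_mul (pow_pos hr k).le, ← Real.rpow_natCast r k,
    ← Real.rpow_add hr]
  congr 1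
  ring

lemma measurable_absrpow (q : ℝ) : Measurable fun v : ℝ => ENNReal.ofReal (|v| ^ q) := by
  refine Measurable.ennreal_ofReal ?_
  refine measurable_of_continuousOn_compl_singleton 0 ?_
  exact (continuous_abs.continuousOn).rpow_const fun x hx =>
    Or.inl (abs_ne_zero.2 (by simpa using hx))

lemma oneDim_translate (q t s : ℝ) (hs : s ∈ Set.Ioc (0:ℝ) t) :
    ∫⁻ u in Set.Ioc (0:ℝ) t, ENNReal.ofReal (|u - s| ^ q)
      ≤ ∫⁻ v in Set.Ioc (-t) t, ENNReal.ofReal (|v| ^ q) := by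
  have hmeas := measurable_absrpow q
  have hmapeq : Measure.map (fun u : ℝ => u + (-s)) volume = volume :=
    map_add_right_eq_self volume (-s)
  have hpre : (fun u : ℝ => u + (-s)) ⁻¹' Set.Ioc (-s) (t - s) = Set.Ioc 0 t := by
    ext u
    simp only [Set.mem_preimage, Set.mem_Ioc]
    constructor <;> intro h <;> exact ⟨by linarith [h.1], by linarith [h.2]⟩
  have key : ∫⁻ v in Set.Ioc (-s) (t - s), ENNReal.ofReal (|v| ^ q)
      = ∫⁻ u in Set.Ioc (0:ℝ) t, ENNReal.ofReal (|u - s| ^ q) := by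
    conv_lhs => rw [← hmapeq]
    rw [setLIntegral_map measurableSet_Ioc hmeas (measurable_add_const (-s)), hpre]
    simp only [← sub_eq_add_neg]
  rw [← key]
  exact lintegral_mono_set (Set.Ioc_subset_Ioc (by linarith [hs.2]) (by linarith [hs.1]))

lemma C0_lt_top {q : ℝ} (hq1 : -1 < q) {t : ℝ} (ht : 0 ≤ t) :
    ∫⁻ v in Set.Ioc (-t) t, ENNReal.ofReal (|v| ^ q) < ⊤ := by
  have hmeas := measurable_absrpow q
  have hP : ∫⁻ v in Set.Ioc (0:ℝ) t, ENNReal.ofReal (|v| ^ q) < ⊤ := by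
    rcases eq_or_lt_of_le ht with h0 | h0
    · simp [← h0]
    · have hi : IntegrableOn (fun v : ℝ => v ^ q) (Set.Ioc 0 t) := by
        have h := intervalIntegral.intervalIntegrable_rpow' (a := 0) (b := t) hq1
        rwa [intervalIntegrable_iff, Set.uIoc_of_le ht] at h
      have hcong : ∫⁻ v in Set.Ioc (0:ℝ) t, ENNReal.ofReal (|v| ^ q)
          = ∫⁻ v in Set.Ioc (0:ℝ) t, ENNReal.ofReal (v ^ q) := by
        apply setLIntegral_congr_fun measurableSet_Ioc
        intro v hv
        simp only
        rw [abs_of_pos hv.1]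
      rw [hcong]
      calc ∫⁻ v in Set.Ioc (0:ℝ) t, ENNReal.ofReal (v ^ q)
          ≤ ∫⁻ v in Set.Ioc (0:ℝ) t, (‖(v:ℝ) ^ q‖₊ : ℝ≥0∞) :=
            lintegral_mono fun v => Real.ofReal_le_enorm _
        _ < ⊤ := hi.2
  have hN : ∫⁻ v in Set.Ioc (-t) (0:ℝ), ENNReal.ofReal (|v| ^ q)
      = ∫⁻ v in Set.Ico (0:ℝ) t, ENNReal.ofReal (|v| ^ q) := by
    have hmapeq : Measure.map (Neg.neg : ℝ → ℝ) volume = volume :=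
      Measure.map_neg_eq_self volume
    have hpre : (Neg.neg : ℝ → ℝ) ⁻¹' Set.Ioc (-t) 0 = Set.Ico 0 t := by
      ext v
      simp only [Set.mem_preimage, Set.mem_Ioc, Set.mem_Ico]
      constructor <;> intro h <;> exact ⟨by linarith [h.1, h.2], by linarith [h.1, h.2]⟩
    conv_lhs => rw [← hmapeq]
    rw [setLIntegral_map measurableSet_Ioc hmeas measurable_neg, hpre]
    simp only [abs_neg]
  have hIco : ∫⁻ v in Set.Ico (0:ℝ) t, ENNReal.ofReal (|v| ^ q)
      = ∫⁻ v in Set.Ioo (0:ℝ) t, ENNReal.ofReal (|v| ^ q) :=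
    (setLIntegral_congr (Ioo_ae_eq_Ico (μ := (volume : Measure ℝ)) (a := 0) (b := t))).symm
  rw [← Set.Ioc_union_Ioc_eq_Ioc (neg_nonpos.mpr ht) ht,
    lintegral_union measurableSet_Ioc (Set.Ioc_disjoint_Ioc_of_le le_rfl)]
  refine ENNReal.add_lt_top.mpr ⟨?_, hP⟩
  rw [hN, hIco]
  exact lt_of_le_of_lt (lintegral_mono_set Set.Ioo_subset_Ioc_self) hP

end TGHAux

theorem stmt0 {k : ℕ} (hk : 1 ≤ k) (α : ℝ)
    (hα₁ : -((k : ℝ) + 1) / 2 < α) (hα₂ : α < -(k : ℝ) / 2)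
    (g : (Fin k → ℝ) → ℝ) (hg : Measurable g)
    (hhom : ∀ c : ℝ, 0 < c → ∀ x : Fin k → ℝ, (∀ i, 0 < x i) →
      g (c • x) = c ^ α * g x)
    (hint : IntegrableOn (fun y : Fin k → ℝ => |g y * g (fun i => 1 + y i)|)
      {y : Fin k → ℝ | ∀ i, 0 < y i})
    (lam : ℝ) (hlam : 0 < lam) (t : ℝ) (ht : 0 ≤ t) :
    MemLp (tghKernel g lam t) 2 (volume : Measure (Fin k → ℝ)) := by
  classical
  set I : Set ℝ := Set.Ioc (0 : ℝ) t with hI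
  set μI : Measure ℝ := volume.restrict I with hmuI
  set q : ℝ := 2 * α + k with hq_def
  have hq1 : (-1 : ℝ) < q := by rw [hq_def]; push_cast; linarith
  -- the kernel as an integral of `F`
  have hKeq : tghKernel g lam t = fun x => ∫ s, TGHAux.F g lam (x, s) ∂μI := by
    funext x
    simp only [tghKernel, TGHAux.F_eq, hmuI, hI]
  have hFm : Measurable (TGHAux.F g lam (k := k)) := TGHAux.measurable_F hg lam
  have hPm : Measurable (TGHAux.Phi g lam (k := k)) := TGHAux.measurable_Phi hg lam
  have hasm : AEStronglyMeasurable (tghKernel g lam t) volume := by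
    rw [hKeq]
    exact (hFm.stronglyMeasurable.integral_prod_right').aestronglyMeasurable
  -- the constant M
  set M : ℝ≥0∞ := ∫⁻ y in {y : Fin k → ℝ | ∀ i, 0 < y i},
    ENNReal.ofReal |g y * g (fun i => 1 + y i)| with hM_def
  have hM : M < ⊤ := by
    have h2 := hint.2
    have hMeq : M = ∫⁻ y in {y : Fin k → ℝ | ∀ i, 0 < y i},
        (‖|g y * g (fun i => 1 + y i)|‖₊ : ℝ≥0∞) := by
      rw [hM_def]
      exact lintegral_congr fun y => by rw [← enorm_eq_nnnorm, Real.enorm_eq_ofReal_abs, abs_abs]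
    rw [hMeq]
    exact h2
  -- the exponent computation
  have key : ∀ {s u : ℝ}, s < u →
      ∫⁻ x : Fin k → ℝ, TGHAux.Phi g lam (x, s) * TGHAux.Phi g lam (x, u)
        ≤ ENNReal.ofReal ((u - s) ^ q) * M := by
    intro s u hsu
    calc ∫⁻ x : Fin k → ℝ, TGHAux.Phi g lam (x, s) * TGHAux.Phi g lam (x, u)
        ≤ ∫⁻ x : Fin k → ℝ, Set.indicator {x : Fin k → ℝ | ∀ i, x i < s}
            (fun x => ENNReal.ofReal |g (fun i => s - x i)| *
              ENNReal.ofReal |g (fun i => u - x i)|) x :=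
          lintegral_mono fun x => TGHAux.Phi_mul_le hlam x hsu.le
      _ = ENNReal.ofReal ((u - s) ^ q) * M := by
          rw [TGHAux.lintegral_indicator_prod_eq hg α hhom hsu, hq_def, hM_def]
  have key' : ∀ s u : ℝ, u ≠ s →
      ∫⁻ x : Fin k → ℝ, TGHAux.Phi g lam (x, s) * TGHAux.Phi g lam (x, u)
        ≤ ENNReal.ofReal (|u - s| ^ q) * M := by
    intro s u hne
    rcases lt_or_gt_of_ne hne with h | h
    · have hcomm : ∫⁻ x : Fin k → ℝ, TGHAux.Phi g lam (x, s) * TGHAux.Phi g lam (x, u)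
          = ∫⁻ x : Fin k → ℝ, TGHAux.Phi g lam (x, u) * TGHAux.Phi g lam (x, s) :=
        lintegral_congr fun x => mul_comm _ _
      rw [hcomm, abs_of_neg (by linarith : u - s < 0), show -(u - s) = s - u by ring]
      exact key h
    · rw [abs_of_pos (by linarith : (0:ℝ) < u - s)]
      exact key h
  -- Tonelli
  have hΦΦ : Measurable (fun z : ((Fin k → ℝ) × ℝ) × ℝ =>
      TGHAux.Phi g lam (z.1.1, z.1.2) * TGHAux.Phi g lam (z.1.1, z.2)) :=
    (hPm.comp ((measurable_fst.comp measurable_fst).prodMk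
        (measurable_snd.comp measurable_fst))).mul
      (hPm.comp ((measurable_fst.comp measurable_fst).prodMk measurable_snd))
  have hInner : Measurable (fun p : (Fin k → ℝ) × ℝ =>
      ∫⁻ u, TGHAux.Phi g lam (p.1, p.2) * TGHAux.Phi g lam (p.1, u) ∂μI) :=
    Measurable.lintegral_prod_right' hΦΦ
  have hsq : ∀ x : Fin k → ℝ,
      (∫⁻ s, TGHAux.Phi g lam (x, s) ∂μI) ^ (2:ℕ)
        = ∫⁻ s, ∫⁻ u, TGHAux.Phi g lam (x, s) * TGHAux.Phi g lam (x, u) ∂μI ∂μI := by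
    intro x
    have hx : Measurable fun s : ℝ => TGHAux.Phi g lam (x, s) :=
      hPm.comp (measurable_const.prodMk measurable_id)
    rw [sq, ← lintegral_mul_const _ hx]
    exact lintegral_congr fun s => (lintegral_const_mul _ hx).symm
  have swap1 : ∫⁻ x : Fin k → ℝ, ∫⁻ s,
        (∫⁻ u, TGHAux.Phi g lam (x, s) * TGHAux.Phi g lam (x, u) ∂μI) ∂μI ∂volume
      = ∫⁻ s, ∫⁻ x : Fin k → ℝ,
        (∫⁻ u, TGHAux.Phi g lam (x, s) * TGHAux.Phi g lam (x, u) ∂μI) ∂volume ∂μI :=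
    lintegral_lintegral_swap hInner.aemeasurable
  have swap2 : ∀ s : ℝ, ∫⁻ x : Fin k → ℝ,
        (∫⁻ u, TGHAux.Phi g lam (x, s) * TGHAux.Phi g lam (x, u) ∂μI) ∂volume
      = ∫⁻ u, (∫⁻ x : Fin k → ℝ,
          TGHAux.Phi g lam (x, s) * TGHAux.Phi g lam (x, u) ∂volume) ∂μI := by
    intro s
    exact lintegral_lintegral_swap
      (((hPm.comp (measurable_fst.prodMk measurable_const)).mul
        (hPm.comp (measurable_fst.prodMk measurable_snd))).aemeasurable)
  -- the final bound
  set C0 : ℝ≥0∞ := ∫⁻ v in Set.Ioc (-t) t, ENNReal.ofReal (|v| ^ q) with hC0_def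
  have hC0 : C0 < ⊤ := TGHAux.C0_lt_top hq1 ht
  have hBound : ∫⁻ s, ∫⁻ u, (∫⁻ x : Fin k → ℝ,
        TGHAux.Phi g lam (x, s) * TGHAux.Phi g lam (x, u) ∂volume) ∂μI ∂μI
      ≤ (C0 * M) * ENNReal.ofReal t := by
    have houter : ∀ s ∈ I, ∫⁻ u, (∫⁻ x : Fin k → ℝ,
          TGHAux.Phi g lam (x, s) * TGHAux.Phi g lam (x, u) ∂volume) ∂μI ≤ C0 * M := by
      intro s hsI
      have hgm : Measurable fun u : ℝ => ENNReal.ofReal (|u - s| ^ q) :=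
        (TGHAux.measurable_absrpow q).comp (measurable_id.sub measurable_const)
      have hae : ∀ᵐ u ∂(volume : Measure ℝ), u ∈ I →
          (∫⁻ x : Fin k → ℝ, TGHAux.Phi g lam (x, s) * TGHAux.Phi g lam (x, u) ∂volume)
            ≤ ENNReal.ofReal (|u - s| ^ q) * M := by
        have hne : ∀ᵐ u ∂(volume : Measure ℝ), u ≠ s := by
          refine ae_iff.mpr ?_
          have : {a : ℝ | ¬a ≠ s} = {s} := by ext a; simp
          rw [this]
          exact measure_singleton s
        filter_upwards [hne] with u hu _
        exact key' s u hu
      calc ∫⁻ u, (∫⁻ x : Fin k → ℝ,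
            TGHAux.Phi g lam (x, s) * TGHAux.Phi g lam (x, u) ∂volume) ∂μI
          ≤ ∫⁻ u, ENNReal.ofReal (|u - s| ^ q) * M ∂μI := by
            rw [hmuI]
            exact setLIntegral_mono_ae (hgm.mul_const M).aemeasurable hae
        _ = (∫⁻ u, ENNReal.ofReal (|u - s| ^ q) ∂μI) * M :=
            lintegral_mul_const _ hgm
        _ ≤ C0 * M := by
            refine mul_le_mul_left ?_ M
            rw [hmuI, hC0_def]
            exact TGHAux.oneDim_translate q t s (by rwa [hI] at hsI)
    calc ∫⁻ s, ∫⁻ u, (∫⁻ x : Fin k → ℝ,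
          TGHAux.Phi g lam (x, s) * TGHAux.Phi g lam (x, u) ∂volume) ∂μI ∂μI
        ≤ ∫⁻ _, C0 * M ∂μI := by
          rw [hmuI]
          exact setLIntegral_mono measurable_const (by rw [← hmuI]; exact houter)
      _ = (C0 * M) * volume I := by rw [hmuI]; exact setLIntegral_const I (C0 * M)
      _ ≤ (C0 * M) * ENNReal.ofReal t := by
          refine mul_le_mul_right ?_ _
          rw [hI, Real.volume_Ioc]
          simp
  -- put everything together
  have hL : ∀ x : Fin k → ℝ, (‖tghKernel g lam t x‖₊ : ℝ≥0∞)
      ≤ ∫⁻ s, TGHAux.Phi g lam (x, s) ∂μI := by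
    intro x
    simp only [hKeq]
    refine le_trans (enorm_integral_le_lintegral_enorm _) (lintegral_mono fun s => ?_)
    rw [Real.enorm_eq_ofReal_abs]
    exact le_of_eq rfl
  have hfinal : ∫⁻ x : Fin k → ℝ, (‖tghKernel g lam t x‖₊ : ℝ≥0∞) ^ (2:ℕ) ∂volume < ⊤ := by
    calc ∫⁻ x : Fin k → ℝ, (‖tghKernel g lam t x‖₊ : ℝ≥0∞) ^ (2:ℕ) ∂volume
        ≤ ∫⁻ x : Fin k → ℝ, (∫⁻ s, TGHAux.Phi g lam (x, s) ∂μI) ^ (2:ℕ) ∂volume :=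
          lintegral_mono fun x => pow_le_pow_left' (hL x) 2
      _ = ∫⁻ s, ∫⁻ u, (∫⁻ x : Fin k → ℝ,
            TGHAux.Phi g lam (x, s) * TGHAux.Phi g lam (x, u) ∂volume) ∂μI ∂μI := by
          simp_rw [hsq]
          rw [swap1]
          exact lintegral_congr fun s => swap2 s
      _ ≤ (C0 * M) * ENNReal.ofReal t := hBound
      _ < ⊤ := by
          exact ENNReal.mul_lt_top (ENNReal.mul_lt_top hC0 hM) ENNReal.ofReal_lt_top
  refine ⟨hasm, ?_⟩
  rw [eLpNorm_eq_lintegral_rpow_enorm_toReal (by norm_num) (by norm_num)]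
  refine ENNReal.rpow_lt_top_of_nonneg (by norm_num) ?_
  have h2 : ((2:ℝ≥0∞).toReal) = ((2:ℕ):ℝ) := by norm_num
  simp_rw [h2, ENNReal.rpow_natCast]
  exact hfinal.ne
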